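/- For a symmetric matrix Z with eigendecomposition Z = Σᵢ λᵢ vᵢvᵢᵀ (orthonormal vᵢ), the matrix Σᵢ max(λᵢ, 0) vᵢvᵢᵀ is the nearest (in Frobenius norm) positive semidefinite matrix to Z. -/

import Mathlib

open Matrix

def frobSq (n : ℕ) (M : Matrix (Fin n) (Fin n) ℝ) : ℝ :=
  ∑ i, ∑ j, (M i j) ^ 2

lemma frobSq_eq_trace (n : ℕ) (M : Matrix (Fin n) (Fin n) ℝ) :
    frobSq n M = (Mᵀ * M).trace := by
  unfold frobSq
  rw [Matrix.trace, Finset.sum_comm]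
  simp only [diag, mul_apply, transpose_apply]
  congr 1; ext i; congr 1; ext j; ring

lemma frobSq_conj (n : ℕ) (V M : Matrix (Fin n) (Fin n) ℝ)
    (hVt : Vᵀ * V = 1) : frobSq n (V * M * Vᵀ) = frobSq n M := by
  rw [frobSq_eq_trace, frobSq_eq_trace]
  have h1 : (V * M * Vᵀ)ᵀ * (V * M * Vᵀ) = V * (Mᵀ * M) * Vᵀ := by
    simp only [transpose_mul, transpose_transpose, Matrix.mul_assoc]
    rw [← Matrix.mul_assoc Vᵀ V, hVt, Matrix.one_mul]
  rw [h1, Matrix.trace_mul_cycle, ← Matrix.mul_assoc, hVt, Matrix.one_mul]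

lemma frobSq_diagonal (n : ℕ) (d : Fin n → ℝ) :
    frobSq n (diagonal d) = ∑ i, d i ^ 2 := by
  unfold frobSq
  congr 1; ext i
  rw [Finset.sum_eq_single i] <;> simp +contextual [diagonal_apply_ne']

lemma min_sq_le (a c : ℝ) (hc : 0 ≤ c) : (min a 0)^2 ≤ (a - c)^2 := by
  rcases le_total a 0 with h | h
  · rw [min_eq_left h]; nlinarith
  · rw [min_eq_right h]; simpa using sq_nonneg (a - c)

lemma min_sq_eq (a c : ℝ) (hc : 0 ≤ c) (h : (a - c)^2 = (min a 0)^2) :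
    c = max a 0 := by
  rcases le_total a 0 with h' | h'
  · rw [min_eq_left h'] at h; rw [max_eq_right h']; nlinarith
  · rw [min_eq_right h'] at h; rw [max_eq_left h']; nlinarith

theorem psd_projection_eigendecomposition (n : ℕ)
    (Z : Matrix (Fin n) (Fin n) ℝ) (hZ : Z.IsSymm)
    (lam : Fin n → ℝ) (v : Fin n → (Fin n → ℝ))
    (horth : ∀ i j, v i ⬝ᵥ v j = if i = j then (1:ℝ) else 0)
    (hdecomp : Z = ∑ i, lam i • vecMulVec (v i) (v i)) :
    (∑ i, max (lam i) 0 • vecMulVec (v i) (v i)).PosSemidef ∧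
    (∀ B : Matrix (Fin n) (Fin n) ℝ, B.PosSemidef →
      frobSq n (Z - ∑ i, max (lam i) 0 • vecMulVec (v i) (v i)) ≤ frobSq n (Z - B)) ∧
    (∀ B : Matrix (Fin n) (Fin n) ℝ, B.PosSemidef →
      (∀ B' : Matrix (Fin n) (Fin n) ℝ, B'.PosSemidef → frobSq n (Z - B) ≤ frobSq n (Z - B')) →
      B = ∑ i, max (lam i) 0 • vecMulVec (v i) (v i)) := by
  classical
  set V : Matrix (Fin n) (Fin n) ℝ := Matrix.of fun a b => v b a with hVdef
  have hVt : Vᵀ * V = 1 := by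
    ext i j
    simpa [hVdef, mul_apply, one_apply, dotProduct] using horth i j
  have hVV : V * Vᵀ = 1 := mul_eq_one_comm.mp hVt
  have hVH : Vᴴ = Vᵀ := by
    ext i j; simp [conjTranspose_apply]
  have hsum : ∀ f : Fin n → ℝ,
      ∑ i, f i • vecMulVec (v i) (v i) = V * diagonal f * Vᵀ := by
    intro f
    ext a b
    simp only [Matrix.sum_apply, Matrix.smul_apply, vecMulVec_apply, smul_eq_mul,
      mul_apply, mul_diagonal, transpose_apply]
    refine Finset.sum_congr rfl fun j _ => ?_
    rw [Finset.sum_eq_single j (fun k _ hk => by simp [diagonal_apply_ne _ hk]) (by simp)]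
    simp [hVdef, diagonal_apply_eq]
    ring
  set A := ∑ i, max (lam i) 0 • vecMulVec (v i) (v i) with hAdef
  have hA : A = V * diagonal (fun i => max (lam i) 0) * Vᵀ := hsum _
  have hZ' : Z = V * diagonal lam * Vᵀ := by rw [hdecomp, hsum]
  -- Z - B = V * (diag lam - Vᵀ B V) * Vᵀ
  have hconjB : ∀ B : Matrix (Fin n) (Fin n) ℝ,
      B = V * (Vᵀ * B * V) * Vᵀ := by
    intro B
    calc B = 1 * B * 1 := by rw [Matrix.one_mul, Matrix.mul_one]
      _ = (V * Vᵀ) * B * (V * Vᵀ) := by rw [hVV]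
      _ = V * (Vᵀ * B * V) * Vᵀ := by simp only [Matrix.mul_assoc]
  have hZA : frobSq n (Z - A) = ∑ i, (min (lam i) 0)^2 := by
    have : Z - A = V * (diagonal fun i => min (lam i) 0) * Vᵀ := by
      have hdiagsub : diagonal lam - diagonal (fun i => max (lam i) 0)
          = diagonal (fun i => min (lam i) 0) := by
        ext i j
        by_cases h : i = j
        · subst h
          simp only [Matrix.sub_apply, diagonal_apply_eq]
          rcases le_total (lam i) 0 with h' | h'
          · rw [max_eq_right h', min_eq_left h', sub_zero]
          · rw [max_eq_left h', min_eq_right h', sub_self]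
        · simp [diagonal_apply_ne _ h]
      rw [hZ', hA, ← Matrix.sub_mul, ← Matrix.mul_sub, hdiagsub]
    rw [this, frobSq_conj n V _ hVt, frobSq_diagonal]
  have hApsd : A.PosSemidef := by
    rw [hA, ← hVH]
    exact (Matrix.PosSemidef.diagonal (fun i => le_max_right _ _)).mul_mul_conjTranspose_same V
  -- key inequality machinery
  have hkey : ∀ B : Matrix (Fin n) (Fin n) ℝ, B.PosSemidef →
      frobSq n (Z - B) = ∑ i, ∑ j, ((diagonal lam - Vᵀ * B * V) i j)^2 ∧
      (∀ i, 0 ≤ (Vᵀ * B * V) i i) := by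
    intro B hB
    constructor
    · have : Z - B = V * (diagonal lam - Vᵀ * B * V) * Vᵀ := by
        rw [Matrix.mul_sub, Matrix.sub_mul, ← hZ', ← hconjB]
      rw [this, frobSq_conj n V _ hVt]; rfl
    · intro i
      have hC : (Vᵀ * B * V).PosSemidef := by
        have hVTH : Vᵀᴴ = V := by ext a b; simp
        have := hB.mul_mul_conjTranspose_same Vᵀ
        rwa [hVTH] at this
      exact hC.diag_nonneg
  have hineq : ∀ B : Matrix (Fin n) (Fin n) ℝ, B.PosSemidef →
      frobSq n (Z - A) ≤ frobSq n (Z - B) := by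
    intro B hB
    obtain ⟨hfB, hdiag⟩ := hkey B hB
    rw [hZA, hfB]
    calc ∑ i, (min (lam i) 0)^2
        ≤ ∑ i, ((diagonal lam - Vᵀ * B * V) i i)^2 := by
          apply Finset.sum_le_sum
          intro i _
          have : (diagonal lam - Vᵀ * B * V) i i = lam i - (Vᵀ * B * V) i i := by
            simp [Matrix.sub_apply]
          rw [this]
          exact min_sq_le _ _ (hdiag i)
      _ ≤ ∑ i, ∑ j, ((diagonal lam - Vᵀ * B * V) i j)^2 := by
          apply Finset.sum_le_sum
          intro i _
          exact Finset.single_le_sum (f := fun j => ((diagonal lam - Vᵀ * B * V) i j)^2)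
            (fun j _ => sq_nonneg _) (Finset.mem_univ i)
  refine ⟨hApsd, hineq, ?_⟩
  -- uniqueness
  intro B hB hmin
  set C := Vᵀ * B * V with hCdef
  obtain ⟨hfB, hdiag⟩ := hkey B hB
  have heq : frobSq n (Z - B) = frobSq n (Z - A) :=
    le_antisymm (hmin A hApsd) (hineq B hB)
  have hsum_eq : ∑ i, ∑ j, ((diagonal lam - C) i j)^2 = ∑ i, (min (lam i) 0)^2 := by
    rw [← hfB, heq, hZA]
  -- each inner sum equals its lower bound
  have hlow : ∀ i, (min (lam i) 0)^2 ≤ ∑ j, ((diagonal lam - C) i j)^2 := by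
    intro i
    calc (min (lam i) 0)^2 ≤ ((diagonal lam - C) i i)^2 := by
          have : (diagonal lam - C) i i = lam i - C i i := by simp [Matrix.sub_apply]
          rw [this]; exact min_sq_le _ _ (hdiag i)
      _ ≤ ∑ j, ((diagonal lam - C) i j)^2 :=
          Finset.single_le_sum (f := fun j => ((diagonal lam - C) i j)^2)
            (fun j _ => sq_nonneg _) (Finset.mem_univ i)
  have hrow : ∀ i, ∑ j, ((diagonal lam - C) i j)^2 = (min (lam i) 0)^2 := by
    intro i
    by_contra hne
    have hlt : (min (lam i) 0)^2 < ∑ j, ((diagonal lam - C) i j)^2 :=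
      lt_of_le_of_ne (hlow i) (Ne.symm hne)
    have : ∑ i, (min (lam i) 0)^2 < ∑ i, ∑ j, ((diagonal lam - C) i j)^2 :=
      Finset.sum_lt_sum (fun k _ => hlow k) ⟨i, Finset.mem_univ i, hlt⟩
    linarith [hsum_eq]
  have hCeq : C = diagonal (fun i => max (lam i) 0) := by
    ext i j
    by_cases hij : i = j
    · subst hij
      -- diagonal entry
      have hdd : ((diagonal lam - C) i i)^2 = (min (lam i) 0)^2 := by
        have h1 : ((diagonal lam - C) i i)^2 ≤ ∑ j, ((diagonal lam - C) i j)^2 :=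
          Finset.single_le_sum (f := fun j => ((diagonal lam - C) i j)^2)
            (fun j _ => sq_nonneg _) (Finset.mem_univ i)
        have h2 : (min (lam i) 0)^2 ≤ ((diagonal lam - C) i i)^2 := by
          have : (diagonal lam - C) i i = lam i - C i i := by simp [Matrix.sub_apply]
          rw [this]; exact min_sq_le _ _ (hdiag i)
        have := hrow i
        linarith
      have : (lam i - C i i)^2 = (min (lam i) 0)^2 := by
        have h3 : (diagonal lam - C) i i = lam i - C i i := by simp [Matrix.sub_apply]
        rw [← h3]; exact hdd
      have := min_sq_eq (lam i) (C i i) (hdiag i) this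
      simp [this]
    · -- off-diagonal entry
      have hzero : ∑ k ∈ Finset.univ.erase i, ((diagonal lam - C) i k)^2 = 0 := by
        have h1 : ∑ k ∈ Finset.univ.erase i, ((diagonal lam - C) i k)^2
            + ((diagonal lam - C) i i)^2 = ∑ k, ((diagonal lam - C) i k)^2 :=
          Finset.sum_erase_add _ _ (Finset.mem_univ i)
        have h2 : (min (lam i) 0)^2 ≤ ((diagonal lam - C) i i)^2 := by
          have : (diagonal lam - C) i i = lam i - C i i := by simp [Matrix.sub_apply]
          rw [this]; exact min_sq_le _ _ (hdiag i)
        have h3 : 0 ≤ ∑ k ∈ Finset.univ.erase i, ((diagonal lam - C) i k)^2 :=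
          Finset.sum_nonneg fun _ _ => sq_nonneg _
        have := hrow i
        linarith
      have hji : j ∈ Finset.univ.erase i := Finset.mem_erase.mpr ⟨fun h => hij h.symm, Finset.mem_univ j⟩
      have := (Finset.sum_eq_zero_iff_of_nonneg (fun k _ => sq_nonneg ((diagonal lam - C) i k))).mp hzero j hji
      have hC0 : (diagonal lam - C) i j = 0 := by
        exact pow_eq_zero_iff (by norm_num) |>.mp this
      have : C i j = 0 := by
        have hd : diagonal lam i j = 0 := diagonal_apply_ne lam hij
        simp [Matrix.sub_apply, hd] at hC0
        linarith [hC0]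
      simp [this, diagonal_apply_ne _ hij]
  rw [hconjB B, ← hCdef, hCeq, ← hA]
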